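/- Let 0 < λ ≤ ρ < 1. Then (1/2)·log(1/(1−λ²)) − (λ/2)·log((2πe)²·(1−ρ)²·(1+λ)/(1−λ)) ≤ (1/2)·log((2πe)²) − ((1+λ)/2)·log((2πe)²·(1−ρ²)). -/

import Mathlib

open Real

/-- Comparison of the two candidate minima in the proof of Lemma 2: for `0 < λ ≤ ρ < 1`,
`f(λ,(1−ρ)/(1−λ),λ) ≤ f(λ,1,ρ)`, i.e. `(1/2)log(1/(1−λ²)) − (λ/2)log((2πe)²(1−ρ)²(1+λ)/(1−λ))
≤ (1/2)log((2πe)²) − ((1+λ)/2)log((2πe)²(1−ρ²))`. -/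
theorem candidate_minima_comparison
    (lam ρ : ℝ) (hlam0 : 0 < lam) (hlamρ : lam ≤ ρ) (hρ : ρ < 1) :
    (1 / 2) * Real.log (1 / (1 - lam ^ 2))
      - (lam / 2) * Real.log ((2 * π * Real.exp 1) ^ 2 * (1 - ρ) ^ 2 * (1 + lam) / (1 - lam))
    ≤ (1 / 2) * Real.log ((2 * π * Real.exp 1) ^ 2)
      - ((1 + lam) / 2) * Real.log ((2 * π * Real.exp 1) ^ 2 * (1 - ρ ^ 2)) := by
  have hlam1 : lam < 1 := lt_of_le_of_lt hlamρ hρ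
  have h1 : (0:ℝ) < 1 - lam := by linarith
  have h2 : (0:ℝ) < 1 + lam := by linarith
  have h3 : (0:ℝ) < 1 - ρ := by linarith
  have h4 : (0:ℝ) < 1 + ρ := by linarith
  have hc : (0:ℝ) < (2 * π * Real.exp 1) ^ 2 := by positivity
  -- key inequality: Gibbs / log x ≤ x - 1
  have k1 : Real.log ((1 + ρ) / (1 + lam)) ≤ (1 + ρ) / (1 + lam) - 1 :=
    Real.log_le_sub_one_of_pos (by positivity)
  have k2 : Real.log ((1 - ρ) / (1 - lam)) ≤ (1 - ρ) / (1 - lam) - 1 :=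
    Real.log_le_sub_one_of_pos (by positivity)
  have e1 : (1 + lam) * ((1 + ρ) / (1 + lam) - 1) = ρ - lam := by field_simp; ring
  have e2 : (1 - lam) * ((1 - ρ) / (1 - lam) - 1) = lam - ρ := by field_simp; ring
  have key : (1 + lam) * Real.log ((1 + ρ) / (1 + lam))
      + (1 - lam) * Real.log ((1 - ρ) / (1 - lam)) ≤ 0 := by
    have t1 : (1 + lam) * Real.log ((1 + ρ) / (1 + lam)) ≤ ρ - lam := by
      calc (1 + lam) * Real.log ((1 + ρ) / (1 + lam))
          ≤ (1 + lam) * ((1 + ρ) / (1 + lam) - 1) := by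
            exact mul_le_mul_of_nonneg_left k1 (le_of_lt h2)
        _ = ρ - lam := e1
    have t2 : (1 - lam) * Real.log ((1 - ρ) / (1 - lam)) ≤ lam - ρ := by
      calc (1 - lam) * Real.log ((1 - ρ) / (1 - lam))
          ≤ (1 - lam) * ((1 - ρ) / (1 - lam) - 1) := by
            exact mul_le_mul_of_nonneg_left k2 (le_of_lt h1)
        _ = lam - ρ := e2
    linarith
  rw [Real.log_div (ne_of_gt h4) (ne_of_gt h2),
      Real.log_div (ne_of_gt h3) (ne_of_gt h1)] at key
  -- expand all the logs in the goal
  have E1 : Real.log (1 / (1 - lam ^ 2))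
      = -(Real.log (1 - lam) + Real.log (1 + lam)) := by
    have h12 : (1:ℝ) - lam ^ 2 = (1 - lam) * (1 + lam) := by ring
    rw [one_div, Real.log_inv, h12, Real.log_mul (ne_of_gt h1) (ne_of_gt h2)]
  have E2 : Real.log ((2 * π * Real.exp 1) ^ 2 * (1 - ρ) ^ 2 * (1 + lam) / (1 - lam))
      = Real.log ((2 * π * Real.exp 1) ^ 2) + 2 * Real.log (1 - ρ)
        + Real.log (1 + lam) - Real.log (1 - lam) := by
    rw [Real.log_div (by positivity) (ne_of_gt h1),
        Real.log_mul (by positivity) (ne_of_gt h2),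
        Real.log_mul (ne_of_gt hc) (by positivity),
        Real.log_pow, Real.log_pow]
    push_cast
    ring
  have E3 : Real.log ((2 * π * Real.exp 1) ^ 2 * (1 - ρ ^ 2))
      = Real.log ((2 * π * Real.exp 1) ^ 2) + Real.log (1 - ρ) + Real.log (1 + ρ) := by
    have h34 : (1:ℝ) - ρ ^ 2 = (1 - ρ) * (1 + ρ) := by ring
    rw [h34, Real.log_mul (ne_of_gt hc) (by positivity),
        Real.log_mul (ne_of_gt h3) (ne_of_gt h4)]
    ring
  rw [E1, E2, E3]
  nlinarith [key]
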